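/- For all real c > -1, the partial products ∏_{n=1}^{N} [((n+1/2)(n+c/2)) / ((n+c)(n+(c+1)/2))]^{u_n} converge as N → ∞ to c+1. -/

import Mathlib

open Filter Finset Topology

/-- The Thue–Morse sequence with values `±1`: `u n = (-1)^(s₂ n)` where `s₂ n`
is the sum of the binary digits of `n`. -/
def u (n : ℕ) : ℤ := (-1) ^ (Nat.digits 2 n).sum

set_option linter.unusedSectionVars false

lemma u_zero : u 0 = 1 := by simp [u]
lemma u_one : u 1 = -1 := by simp [u]

lemma u_even (n : ℕ) : u (2 * n) = u n := by
  rcases Nat.eq_zero_or_pos n with h | h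
  · simp [h]
  · unfold u
    rw [Nat.digits_def' (by norm_num : 1 < 2) (by omega)]
    have h1 : 2 * n % 2 = 0 := by omega
    have h2 : 2 * n / 2 = n := by omega
    rw [h1, h2]
    simp

lemma u_odd (n : ℕ) : u (2 * n + 1) = - u n := by
  unfold u
  rw [Nat.digits_def' (by norm_num : 1 < 2) (by omega)]
  have h1 : (2 * n + 1) % 2 = 1 := by omega
  have h2 : (2 * n + 1) / 2 = n := by omega
  rw [h1, h2]
  simp [pow_add]

lemma abs_u (n : ℕ) : |u n| = 1 := by simp [u, abs_pow]

def S (k : ℕ) : ℤ := ∑ n ∈ Finset.range k, u n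

lemma S_even (m : ℕ) : S (2 * m) = 0 := by
  induction m with
  | zero => simp [S]
  | succ m ih =>
    have h : 2 * (m + 1) = (2 * m + 1) + 1 := by ring
    rw [h]
    unfold S at *
    rw [Finset.sum_range_succ, Finset.sum_range_succ, u_odd, u_even]
    linarith

lemma abs_S_le (k : ℕ) : |S k| ≤ 1 := by
  rcases Nat.even_or_odd k with ⟨m, hm⟩ | ⟨m, hm⟩
  · rw [show k = 2 * m from by omega, S_even]; norm_num
  · rw [show k = 2 * m + 1 from by omega]
    unfold S
    rw [Finset.sum_range_succ, show 2*m = 2*m from rfl]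
    have := S_even m
    unfold S at this
    rw [this, zero_add]
    rw [abs_u]


lemma abel_aux (v : ℕ → ℤ) (w : ℕ → ℝ) (a : ℕ)
    (hv : ∀ k, |(∑ n ∈ Finset.Ico a k, v n : ℤ)| ≤ 2)
    (hwa : ∀ n, a ≤ n → w (n + 1) ≤ w n) :
    ∀ b, a ≤ b →
      |(∑ n ∈ Finset.Ico a b, (v n : ℝ) * w n) -
        (∑ n ∈ Finset.Ico a b, (v n : ℝ)) * w b| ≤ 2 * (w a - w b) := by
  intro b hb
  induction b, hb using Nat.le_induction with
  | base => simp
  | succ b hb ih =>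
    rw [Finset.sum_Ico_succ_top hb, Finset.sum_Ico_succ_top hb]
    have hS : |(∑ n ∈ Finset.Ico a (b+1), (v n : ℝ))| ≤ 2 := by
      have := hv (b+1)
      calc |(∑ n ∈ Finset.Ico a (b+1), (v n : ℝ))|
          = |((∑ n ∈ Finset.Ico a (b+1), v n : ℤ) : ℝ)| := by push_cast; ring_nf
        _ ≤ 2 := by rw [← Int.cast_abs]; exact_mod_cast this
    have hS' : (∑ n ∈ Finset.Ico a (b+1), (v n : ℝ)) = (∑ n ∈ Finset.Ico a b, (v n : ℝ)) + v b := by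
      rw [Finset.sum_Ico_succ_top hb]
    have key : (∑ n ∈ Finset.Ico a b, (v n : ℝ) * w n) + (v b:ℝ) * w b -
        ((∑ n ∈ Finset.Ico a b, (v n : ℝ)) + (v b:ℝ)) * w (b+1)
        = ((∑ n ∈ Finset.Ico a b, (v n : ℝ) * w n) - (∑ n ∈ Finset.Ico a b, (v n : ℝ)) * w b)
          + ((∑ n ∈ Finset.Ico a b, (v n : ℝ)) + (v b:ℝ)) * (w b - w (b+1)) := by ring
    rw [key]
    have h1 : |((∑ n ∈ Finset.Ico a b, (v n : ℝ)) + (v b:ℝ)) * (w b - w (b+1))| ≤ 2 * (w b - w (b+1)) := by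
      rw [abs_mul]
      have h2 : 0 ≤ w b - w (b+1) := by linarith [hwa b hb]
      rw [abs_of_nonneg h2]
      apply mul_le_mul_of_nonneg_right _ h2
      rw [← hS']; exact hS
    calc _ ≤ _ := abs_add_le _ _
      _ ≤ 2 * (w a - w b) + 2 * (w b - w (b+1)) := add_le_add ih h1
      _ = 2 * (w a - w (b+1)) := by ring

lemma abel_bound (v : ℕ → ℤ) (w : ℕ → ℝ) (a : ℕ)
    (hv : ∀ k, |(∑ n ∈ Finset.Ico a k, v n : ℤ)| ≤ 2)
    (hw0 : ∀ n, a ≤ n → 0 ≤ w n)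
    (hwa : ∀ n, a ≤ n → w (n + 1) ≤ w n)
    (b : ℕ) (hb : a ≤ b) :
    |∑ n ∈ Finset.Ico a b, (v n : ℝ) * w n| ≤ 4 * w a := by
  have h1 := abel_aux v w a hv hwa b hb
  have hS : |(∑ n ∈ Finset.Ico a b, (v n : ℝ))| ≤ 2 := by
    have := hv b
    calc |(∑ n ∈ Finset.Ico a b, (v n : ℝ))|
        = |((∑ n ∈ Finset.Ico a b, v n : ℤ) : ℝ)| := by push_cast; ring_nf
      _ ≤ 2 := by rw [← Int.cast_abs]; exact_mod_cast this
  have hwb := hw0 b hb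
  have hwab : w b ≤ w a := by
    clear h1 hS hwb
    induction b, hb using Nat.le_induction with
    | base => exact le_rfl
    | succ b hb ih => exact le_trans (hwa b hb) ih
  set X := ∑ n ∈ Finset.Ico a b, (v n : ℝ) * w n with hX
  set Y := (∑ n ∈ Finset.Ico a b, (v n : ℝ)) * w b with hY
  have habs : |X| ≤ |X - Y| + |Y| := by
    have := abs_add_le (X - Y) Y
    simpa using this
  have hYb : |Y| ≤ 2 * w b := by
    rw [hY, abs_mul, abs_of_nonneg hwb]
    exact mul_le_mul_of_nonneg_right hS hwb
  have := hw0 a le_rfl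
  calc |X| ≤ |X - Y| + |Y| := habs
    _ ≤ 2 * (w a - w b) + 2 * w b := add_le_add h1 hYb
    _ ≤ 4 * w a := by nlinarith


noncomputable def gg (c : ℝ) (n : ℕ) : ℝ := ((n : ℝ) + c) / n

noncomputable def aa (c : ℝ) (n : ℕ) : ℝ :=
  (((n : ℝ) + 1 / 2) * ((n : ℝ) + c / 2)) / (((n : ℝ) + c) * ((n : ℝ) + (c + 1) / 2))
noncomputable def T (c : ℝ) (M : ℕ) : ℝ := ∏ n ∈ Finset.Icc 1 M, gg c n ^ u n
noncomputable def P (c : ℝ) (N : ℕ) : ℝ := ∏ n ∈ Finset.Icc 1 N, aa c n ^ u n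

lemma gg_pos {c : ℝ} (hc : -1 < c) {n : ℕ} (hn : 1 ≤ n) : 0 < gg c n := by
  have h : (1:ℝ) ≤ (n:ℝ) := by exact_mod_cast hn
  apply div_pos <;> linarith

lemma T_pos {c : ℝ} (hc : -1 < c) (M : ℕ) : 0 < T c M := by
  apply Finset.prod_pos
  intro n hn
  exact zpow_pos (gg_pos hc (Finset.mem_Icc.1 hn).1) _

lemma key_frac {c : ℝ} (hc : -1 < c) {m : ℕ} (hm : 1 ≤ m) :
    aa c m * gg c m = gg c (2 * m) / gg c (2 * m + 1) := by
  have h : (1:ℝ) ≤ (m:ℝ) := by exact_mod_cast hm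
  unfold aa gg
  push_cast
  have h1 : (m:ℝ) + c ≠ 0 := by linarith
  have h2 : (m:ℝ) + (c + 1) / 2 ≠ 0 := by linarith
  have h3 : (m:ℝ) ≠ 0 := by linarith
  have h4 : 2 * (m:ℝ) ≠ 0 := by linarith
  have h5 : 2 * (m:ℝ) + 1 + c ≠ 0 := by linarith
  have h6 : 2 * (m:ℝ) + 1 ≠ 0 := by linarith
  have e1 : ((2*(m:ℝ)+c)/(2*m)) / ((2*(m:ℝ)+1+c)/(2*m+1)) = ((2*(m:ℝ)+c)*(2*m+1)) / ((2*(m:ℝ))*(2*m+1+c)) := by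
    field_simp
  rw [e1, div_mul_div_comm, div_eq_div_iff (by positivity) (by positivity)]
  ring

lemma telescope {c : ℝ} (hc : -1 < c) (N : ℕ) :
    P c N * T c N = (c + 1) * T c (2 * N + 1) := by
  induction N with
  | zero =>
    have hc1 : c + 1 ≠ 0 := by linarith
    simp [P, T, u_one, gg]
    rw [show (1:ℝ) + c = c + 1 from by ring]
    exact (mul_inv_cancel₀ hc1).symm
  | succ N ih =>
    have h1 : P c (N + 1) = P c N * aa c (N + 1) ^ u (N + 1) := by
      unfold P; rw [Finset.prod_Icc_succ_top (by omega)]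
    have h2 : T c (N + 1) = T c N * gg c (N + 1) ^ u (N + 1) := by
      unfold T; rw [Finset.prod_Icc_succ_top (by omega)]
    have h3 : T c (2 * (N + 1) + 1) =
        T c (2 * N + 1) * gg c (2 * N + 2) ^ u (2 * N + 2) * gg c (2 * N + 3) ^ u (2 * N + 3) := by
      unfold T
      rw [show 2 * (N + 1) + 1 = (2 * N + 2) + 1 from by ring,
        Finset.prod_Icc_succ_top (by omega), Finset.prod_Icc_succ_top (by omega)]
    have hu2 : u (2 * N + 2) = u (N + 1) := by
      rw [show 2 * N + 2 = 2 * (N + 1) from by ring, u_even]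
    have hu3 : u (2 * N + 3) = - u (N + 1) := by
      rw [show 2 * N + 3 = 2 * (N + 1) + 1 from by ring, u_odd]
    have hg3 : gg c (2 * N + 3) ≠ 0 := ne_of_gt (gg_pos hc (by omega))
    have hkey := key_frac hc (show 1 ≤ N + 1 from by omega)
    rw [show 2*(N+1) = 2*N+2 from by ring] at hkey
    rw [show 2*N+2+1 = 2*N+3 from by omega] at hkey
    rw [h1, h2, h3, hu2, hu3]
    calc P c N * aa c (N+1) ^ u (N+1) * (T c N * gg c (N+1) ^ u (N+1))
        = (P c N * T c N) * (aa c (N+1) * gg c (N+1)) ^ u (N+1) := by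
          rw [mul_zpow]; ring
      _ = (c + 1) * T c (2*N+1) * (gg c (2*N+2) / gg c (2*N+3)) ^ u (N+1) := by
          rw [ih, hkey]
      _ = (c + 1) * (T c (2*N+1) * gg c (2*N+2) ^ u (N+1) * gg c (2*N+3) ^ (- u (N+1))) := by
          rw [div_zpow, zpow_neg]
          ring


section
variable {c : ℝ} (hc : -1 < c)
include hc

lemma gg_ge_one (hcc : 0 ≤ c) {n : ℕ} (hn : 1 ≤ n) : 1 ≤ gg c n := by
  have h : (1:ℝ) ≤ (n:ℝ) := by exact_mod_cast hn
  rw [gg, le_div_iff₀ (by linarith)]; linarith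

lemma gg_le_one (hcc : c ≤ 0) {n : ℕ} (hn : 1 ≤ n) : gg c n ≤ 1 := by
  have h : (1:ℝ) ≤ (n:ℝ) := by exact_mod_cast hn
  rw [gg, div_le_one (by linarith)]; linarith

lemma gg_anti (hcc : 0 ≤ c) {n : ℕ} (hn : 1 ≤ n) : gg c (n+1) ≤ gg c n := by
  have h : (1:ℝ) ≤ (n:ℝ) := by exact_mod_cast hn
  rw [gg, gg]
  push_cast
  rw [div_le_div_iff₀ (by linarith) (by linarith)]
  nlinarith

lemma gg_mono (hcc : c ≤ 0) {n : ℕ} (hn : 1 ≤ n) : gg c n ≤ gg c (n+1) := by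
  have h : (1:ℝ) ≤ (n:ℝ) := by exact_mod_cast hn
  have hc' : -1 < c := hc
  rw [gg, gg]
  push_cast
  rw [div_le_div_iff₀ (by linarith) (by linarith)]
  nlinarith

lemma w_anti {n : ℕ} (hn : 1 ≤ n) : |Real.log (gg c (n+1))| ≤ |Real.log (gg c n)| := by
  rcases le_or_gt 0 c with hcc | hcc
  · rw [abs_of_nonneg (Real.log_nonneg (gg_ge_one hc hcc hn)),
      abs_of_nonneg (Real.log_nonneg (gg_ge_one hc hcc (by omega)))]
    exact Real.log_le_log (gg_pos hc (by omega)) (gg_anti hc hcc hn)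
  · rw [abs_of_nonpos (Real.log_nonpos (le_of_lt (gg_pos hc hn)) (gg_le_one hc hcc.le hn)),
      abs_of_nonpos (Real.log_nonpos (le_of_lt (gg_pos hc (by omega))) (gg_le_one hc hcc.le (by omega)))]
    have := Real.log_le_log (gg_pos hc hn) (gg_mono hc hcc.le hn)
    linarith

lemma w_tendsto : Tendsto (fun N : ℕ => |Real.log (gg c (N+1))|) atTop (𝓝 0) := by
  have h1 : Tendsto (fun N : ℕ => ((N:ℝ) + 1)) atTop atTop :=
    tendsto_atTop_add_const_right atTop 1 tendsto_natCast_atTop_atTop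
  have h2 : Tendsto (fun N : ℕ => c / ((N:ℝ) + 1)) atTop (𝓝 0) :=
    Tendsto.div_atTop tendsto_const_nhds h1
  have h3 : Tendsto (fun N : ℕ => 1 + c / ((N:ℝ) + 1)) atTop (𝓝 1) := by
    have := tendsto_const_nhds (x := (1:ℝ)) (f := atTop (α := ℕ)) |>.add h2
    simpa using this
  have h4 : Tendsto (fun N : ℕ => gg c (N+1)) atTop (𝓝 1) := by
    apply h3.congr
    intro N
    have hN : ((N:ℝ) + 1) ≠ 0 := by positivity
    rw [gg]
    push_cast
    field_simp
  have h5 : Tendsto (fun N : ℕ => Real.log (gg c (N+1))) atTop (𝓝 0) := by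
    have := ((Real.continuousAt_log one_ne_zero).tendsto).comp h4
    simpa [Function.comp_def] using this
  simpa using h5.abs

end

lemma log_T {c : ℝ} (hc : -1 < c) (M : ℕ) :
    Real.log (T c M) = ∑ n ∈ Finset.Icc 1 M, (u n : ℝ) * Real.log (gg c n) := by
  rw [T, Real.log_prod]
  · refine Finset.sum_congr rfl fun n hn => ?_
    rw [Real.log_zpow]
  · intro n hn
    exact zpow_ne_zero _ (ne_of_gt (gg_pos hc (Finset.mem_Icc.1 hn).1))

lemma D_eq {c : ℝ} (hc : -1 < c) (N : ℕ) :
    Real.log (T c (2 * N + 1)) - Real.log (T c N) =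
      ∑ n ∈ Finset.Ico (N + 1) (2 * N + 2), (u n : ℝ) * Real.log (gg c n) := by
  rw [log_T hc, log_T hc]
  have e1 : ∀ M : ℕ, Finset.Icc 1 M = Finset.Ioc 0 M := fun M => rfl
  rw [e1, e1]
  have e2 : Finset.Ioc N (2 * N + 1) = Finset.Ico (N + 1) (2 * N + 2) := by
    ext x; simp [Finset.mem_Ioc, Finset.mem_Ico]; omega
  have := Finset.sum_Ioc_consecutive (fun n => (u n : ℝ) * Real.log (gg c n))
    (Nat.zero_le N) (show N ≤ 2 * N + 1 by omega)
  rw [← this, e2]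
  ring

lemma hv_bound (a : ℕ) (k : ℕ) : |(∑ n ∈ Finset.Ico a k, u n : ℤ)| ≤ 2 := by
  rcases le_or_gt a k with h | h
  · rw [Finset.sum_Ico_eq_sub _ h]
    calc |(∑ n ∈ Finset.range k, u n) - ∑ n ∈ Finset.range a, u n|
        ≤ |(∑ n ∈ Finset.range k, u n)| + |(∑ n ∈ Finset.range a, u n)| := abs_sub _ _
      _ ≤ 2 := by have := abs_S_le k; have := abs_S_le a; unfold S at *; omega
  · rw [Finset.Ico_eq_empty (by omega)]
    simp

lemma D_bound {c : ℝ} (hc : -1 < c) (N : ℕ) :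
    |∑ n ∈ Finset.Ico (N + 1) (2 * N + 2), (u n : ℝ) * Real.log (gg c n)| ≤
      4 * |Real.log (gg c (N + 1))| := by
  rcases le_or_gt 0 c with hcc | hcc
  · have h := abel_bound u (fun n => Real.log (gg c n)) (N + 1) (hv_bound (N+1))
      (fun n hn => Real.log_nonneg (gg_ge_one hc hcc (by omega)))
      (fun n hn => Real.log_le_log (gg_pos hc (by omega)) (gg_anti hc hcc (by omega)))
      (2 * N + 2) (by omega)
    rwa [abs_of_nonneg (Real.log_nonneg (gg_ge_one hc hcc (by omega)))]
  · have h := abel_bound u (fun n => -Real.log (gg c n)) (N + 1) (hv_bound (N+1))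
      (fun n hn => by
        have := Real.log_nonpos (le_of_lt (gg_pos hc (show 1 ≤ n by omega)))
          (gg_le_one hc hcc.le (show 1 ≤ n by omega))
        linarith)
      (fun n hn => by
        have := Real.log_le_log (gg_pos hc (show 1 ≤ n by omega)) (gg_mono hc hcc.le (show 1 ≤ n by omega))
        linarith)
      (2 * N + 2) (by omega)
    have e : ∑ n ∈ Finset.Ico (N + 1) (2 * N + 2), (u n : ℝ) * (- Real.log (gg c n))
        = - ∑ n ∈ Finset.Ico (N + 1) (2 * N + 2), (u n : ℝ) * Real.log (gg c n) := by
      rw [← Finset.sum_neg_distrib]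
      exact Finset.sum_congr rfl fun n _ => by ring
    rw [e, abs_neg] at h
    have e2 : |Real.log (gg c (N+1))| = - Real.log (gg c (N+1)) :=
      abs_of_nonpos (Real.log_nonpos (le_of_lt (gg_pos hc (by omega))) (gg_le_one hc hcc.le (by omega)))
    rw [e2]
    exact h

/-- For `c > -1`, the partial products
`∏_{n=1}^{N} [((n+1/2)(n+c/2)) / ((n+c)(n+(c+1)/2))]^{u_n}` converge to `c+1`. -/
theorem stmt_16 (c : ℝ) (hc : -1 < c) :
    Tendsto (fun N : ℕ => ∏ n ∈ Finset.Icc 1 N,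
      ((((n : ℝ) + 1 / 2) * ((n : ℝ) + c / 2)) /
        (((n : ℝ) + c) * ((n : ℝ) + (c + 1) / 2))) ^ (u n))
      atTop (𝓝 (c + 1)) := by
  have hPeq : (fun N : ℕ => ∏ n ∈ Finset.Icc 1 N,
      ((((n : ℝ) + 1 / 2) * ((n : ℝ) + c / 2)) /
        (((n : ℝ) + c) * ((n : ℝ) + (c + 1) / 2))) ^ (u n)) = P c := by
    funext N; simp only [P, aa]
  rw [hPeq]
  have hPD : ∀ N, P c N = (c + 1) * Real.exp (Real.log (T c (2 * N + 1)) - Real.log (T c N)) := by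
    intro N
    rw [Real.exp_sub, Real.exp_log (T_pos hc _), Real.exp_log (T_pos hc _)]
    have hT : T c N ≠ 0 := ne_of_gt (T_pos hc N)
    field_simp
    exact telescope hc N
  have hD : Tendsto (fun N : ℕ => Real.log (T c (2 * N + 1)) - Real.log (T c N)) atTop (𝓝 0) := by
    have hlim : Tendsto (fun N : ℕ => 4 * |Real.log (gg c (N + 1))|) atTop (𝓝 0) := by
      have := (w_tendsto hc).const_mul 4
      simpa using this
    refine squeeze_zero_norm (fun N => ?_) hlim
    rw [Real.norm_eq_abs, D_eq hc N]
    exact D_bound hc N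
  have hfinal : Tendsto (fun N : ℕ => (c + 1) * Real.exp (Real.log (T c (2 * N + 1)) - Real.log (T c N)))
      atTop (𝓝 (c + 1)) := by
    have := tendsto_const_nhds (x := c + 1) (f := atTop (α := ℕ)) |>.mul
      ((Real.continuous_exp.tendsto 0).comp hD)
    simpa using this
  exact hfinal.congr (fun N => (hPD N).symm)
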